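/- arXiv:1605.06530 — 2 statements merged into one kernel-verified Lean document; each statement's English description precedes it below -/
import Mathlib

section
/- Let G be a finite connected weighted graph and let (τ_{ij}) be its coalescence times. Then τ^{(2)} + τ^{(3)} ≥ τ^{(1)}, with equality if and only if G has exactly two vertices and no self-loops. -/
open Finset Filter Asymptotics

set_option linter.unusedSectionVars false
set_option linter.unusedVariables false
set_option maxHeartbeats 1000000

noncomputable section

namespace EvoGraph

variable {V : Type*} [Fintype V] [DecidableEq V]

/-- Weighted degree `w_i = ∑_j w_{ij}`. -/
def deg (w : V → V → ℝ) (i : V) : ℝ := ∑ j, w i j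

/-- Total edge weight `W = ∑_i w_i`. -/
def Wtot (w : V → V → ℝ) : ℝ := ∑ i, deg w i

/-- Random-walk step probability `p_{ij} = w_{ij}/w_i`. -/
def step (w : V → V → ℝ) (i j : V) : ℝ := w i j / deg w i

/-- The stochastic matrix `(p_{ij})`. -/
def stepMat (w : V → V → ℝ) : Matrix V V ℝ := Matrix.of fun i j => step w i j

/-- `n`-step probability `p^{(n)}_{ij}`: the `(i,j)` entry of the `n`-th power of `(p_{ij})`. -/
def stepN (w : V → V → ℝ) (n : ℕ) (i j : V) : ℝ := (stepMat w ^ n) i j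

/-- Stationary distribution `π_i = w_i / W`. -/
def statDist (w : V → V → ℝ) (i : V) : ℝ := deg w i / Wtot w

/-- `w` is a finite connected weighted graph: symmetric nonnegative weights
(self-loops allowed), positive weighted degrees, and any two vertices joined by
a path of edges of positive weight. -/
def IsWeightedGraph (w : V → V → ℝ) : Prop :=
  (∀ i j, w i j = w j i) ∧ (∀ i j, 0 ≤ w i j) ∧ (∀ i, 0 < deg w i) ∧
  ∀ i j : V, Relation.ReflTransGen (fun a b => 0 < w a b) i j

/-- `τ` is the (symmetric) solution of the coalescence-time system:
`τ_{ii} = 0`, and `τ_{ij} = 1 + (1/2) ∑_k (p_{ik} τ_{kj} + p_{jk} τ_{ik})` for `i ≠ j`. -/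
def IsCoalescent (w : V → V → ℝ) (τ : V → V → ℝ) : Prop :=
  (∀ i j, τ i j = τ j i) ∧ (∀ i, τ i i = 0) ∧
  ∀ i j, i ≠ j →
    τ i j = 1 + (1 / 2) * ∑ k, (step w i k * τ k j + step w j k * τ i k)

/-- `τ^{(n)} = ∑_{i,j} π_i p^{(n)}_{ij} τ_{ij}`. -/
def tauWalk (w τ : V → V → ℝ) (n : ℕ) : ℝ :=
  ∑ i, ∑ j, statDist w i * stepN w n i j * τ i j

/-- Remeeting time `τ⁺_i = 1 + ∑_j p_{ij} τ_{ij}`. -/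
def remeet (w τ : V → V → ℝ) (i : V) : ℝ := 1 + ∑ j, step w i j * τ i j

section Aux

variable (w τ : V → V → ℝ)

lemma sum_step (hdeg : ∀ i, 0 < deg w i) (i : V) : ∑ j, step w i j = 1 := by
  simp only [step]
  rw [← Finset.sum_div]
  exact div_self (hdeg i).ne'

lemma Wtot_pos [Nonempty V] (hdeg : ∀ i, 0 < deg w i) : 0 < Wtot w :=
  Finset.sum_pos (fun i _ => hdeg i) Finset.univ_nonempty

lemma statDist_pos [Nonempty V] (hdeg : ∀ i, 0 < deg w i) (i : V) : 0 < statDist w i :=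
  div_pos (hdeg i) (Wtot_pos w hdeg)

lemma sum_statDist [Nonempty V] (hdeg : ∀ i, 0 < deg w i) : ∑ i, statDist w i = 1 := by
  simp only [statDist]
  rw [← Finset.sum_div]
  exact div_self (Wtot_pos w hdeg).ne'

lemma step_nonneg (hnn : ∀ i j, 0 ≤ w i j) (hdeg : ∀ i, 0 < deg w i) (i j : V) :
    0 ≤ step w i j := div_nonneg (hnn i j) (hdeg i).le

lemma statDist_mul_step [Nonempty V] (hdeg : ∀ i, 0 < deg w i) (i j : V) :
    statDist w i * step w i j = w i j / Wtot w := by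
  have h1 : deg w i ≠ 0 := (hdeg i).ne'
  have h2 : Wtot w ≠ 0 := (Wtot_pos w hdeg).ne'
  rw [statDist, step]
  field_simp

lemma rev [Nonempty V] (hsym : ∀ i j, w i j = w j i) (hdeg : ∀ i, 0 < deg w i) (i j : V) :
    statDist w i * step w i j = statDist w j * step w j i := by
  rw [statDist_mul_step w hdeg, statDist_mul_step w hdeg, hsym i j]

lemma stat [Nonempty V] (hsym : ∀ i j, w i j = w j i) (hdeg : ∀ i, 0 < deg w i) (j : V) :
    ∑ i, statDist w i * step w i j = statDist w j := by
  calc ∑ i, statDist w i * step w i j = ∑ i, w i j / Wtot w :=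
        sum_congr rfl fun i _ => statDist_mul_step w hdeg i j
    _ = (∑ i, w j i) / Wtot w := by
        rw [← Finset.sum_div]; congr 1; exact sum_congr rfl fun i _ => (hsym i j).symm ▸ rfl
    _ = statDist w j := rfl


lemma tau_nonneg [Nonempty V] (hnn : ∀ i j, 0 ≤ w i j) (hdeg : ∀ i, 0 < deg w i)
    (hτ : IsCoalescent w τ) : ∀ i j, 0 ≤ τ i j := by
  obtain ⟨hsymτ, hdiag, heq⟩ := hτ
  obtain ⟨⟨a, b⟩, -, hmin⟩ := Finset.exists_min_image (Finset.univ ×ˢ Finset.univ)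
    (fun p => τ p.1 p.2) (Finset.univ_nonempty)
  have hmin' : ∀ i j, τ a b ≤ τ i j := fun i j => hmin (i, j) (by simp)
  by_cases hab : a = b
  · intro i j
    calc (0:ℝ) = τ a b := by rw [hab, hdiag b]
      _ ≤ τ i j := hmin' i j
  · exfalso
    have hge : ∑ k, (step w a k * τ a b + step w b k * τ a b)
        ≤ ∑ k, (step w a k * τ k b + step w b k * τ a k) := by
      refine Finset.sum_le_sum fun k _ => ?_
      have h1 := mul_le_mul_of_nonneg_left (hmin' k b) (step_nonneg w hnn hdeg a k)
      have h2 := mul_le_mul_of_nonneg_left (hmin' a k) (step_nonneg w hnn hdeg b k)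
      linarith
    have hsum : ∑ k, (step w a k * τ a b + step w b k * τ a b) = 2 * τ a b := by
      rw [Finset.sum_add_distrib, ← Finset.sum_mul, ← Finset.sum_mul,
        sum_step w hdeg a, sum_step w hdeg b]
      ring
    have := heq a b hab
    rw [hsum] at hge
    linarith

lemma one_le_remeet [Nonempty V] (hnn : ∀ i j, 0 ≤ w i j) (hdeg : ∀ i, 0 < deg w i)
    (hτ : IsCoalescent w τ) (i : V) : 1 ≤ remeet w τ i := by
  have : 0 ≤ ∑ j, step w i j * τ i j :=
    Finset.sum_nonneg fun j _ =>
      mul_nonneg (step_nonneg w hnn hdeg i j) (tau_nonneg w τ hnn hdeg hτ i j)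
  rw [remeet]; linarith

lemma bracket (hτ : IsCoalescent w τ) (i k : V) :
    ∑ j, (step w i j * τ j k + step w k j * τ i j)
      = 2 * τ i k - 2 + (if i = k then 2 * remeet w τ i else 0) := by
  obtain ⟨hsymτ, hdiag, heq⟩ := hτ
  by_cases h : i = k
  · subst h
    rw [if_pos rfl]
    have h1 : ∀ j, step w i j * τ j i + step w i j * τ i j = 2 * (step w i j * τ i j) := by
      intro j; rw [hsymτ j i]; ring
    rw [Finset.sum_congr rfl fun j _ => h1 j, ← Finset.mul_sum, remeet, hdiag i]
    ring
  · rw [if_neg h]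
    have := heq i k h
    linarith

lemma sum_kernel_swap (x : ℝ) (r : V → ℝ) (p : V → V → ℝ) (t : V → ℝ) :
    ∑ j, x * (∑ k, r k * p k j) * t j = ∑ k, x * r k * (∑ j, p k j * t j) := by
  calc ∑ j, x * (∑ k, r k * p k j) * t j
      = ∑ j, ∑ k, x * r k * (p k j * t j) := by
        refine sum_congr rfl fun j _ => ?_
        rw [Finset.mul_sum, Finset.sum_mul]
        exact sum_congr rfl fun k _ => by ring
    _ = ∑ k, ∑ j, x * r k * (p k j * t j) := Finset.sum_comm
    _ = ∑ k, x * r k * (∑ j, p k j * t j) :=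
        sum_congr rfl fun k _ => (Finset.mul_sum _ _ _).symm

lemma key_identity [Nonempty V] (hdeg : ∀ i, 0 < deg w i)
    (hτ : IsCoalescent w τ) (R : V → V → ℝ)
    (hrev : ∀ i k, statDist w i * R i k = statDist w k * R k i)
    (hrow : ∀ i, ∑ k, R i k = 1) :
    ∑ i, ∑ k, statDist w i * R i k * (∑ j, step w k j * τ i j)
      = (∑ i, ∑ k, statDist w i * R i k * τ i k) - 1
        + ∑ i, statDist w i * R i i * remeet w τ i := by
  have hsymτ := hτ.1
  set π := statDist w with hπdef
  have hPR : ∑ i, ∑ k, π i * R i k = 1 := by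
    have h1 : ∀ i, ∑ k, π i * R i k = π i := fun i => by
      rw [← Finset.mul_sum, hrow i, mul_one]
    rw [sum_congr rfl fun i _ => h1 i, sum_statDist w hdeg]
  have hAB :
      (∑ i, ∑ k, π i * R i k * (∑ j, step w i j * τ j k))
        = ∑ i, ∑ k, π i * R i k * (∑ j, step w k j * τ i j) := by
    calc ∑ i, ∑ k, π i * R i k * (∑ j, step w i j * τ j k)
        = ∑ i, ∑ k, π k * R k i * (∑ j, step w i j * τ j k) :=
          sum_congr rfl fun i _ => sum_congr rfl fun k _ => by rw [hrev i k]
      _ = ∑ k, ∑ i, π k * R k i * (∑ j, step w i j * τ j k) := Finset.sum_comm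
      _ = ∑ i, ∑ k, π i * R i k * (∑ j, step w k j * τ j i) := rfl
      _ = ∑ i, ∑ k, π i * R i k * (∑ j, step w k j * τ i j) := by
          refine sum_congr rfl fun i _ => sum_congr rfl fun k _ => ?_
          rw [sum_congr rfl fun j _ => by rw [hsymτ j i]]
  have h2A : (∑ i, ∑ k, π i * R i k * (∑ j, step w k j * τ i j))
      + (∑ i, ∑ k, π i * R i k * (∑ j, step w k j * τ i j))
      = 2 * (∑ i, ∑ k, π i * R i k * τ i k) - 2
        + 2 * (∑ i, π i * R i i * remeet w τ i) := by
    nth_rewrite 1 [← hAB]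
    calc (∑ i, ∑ k, π i * R i k * (∑ j, step w i j * τ j k))
          + (∑ i, ∑ k, π i * R i k * (∑ j, step w k j * τ i j))
        = ∑ i, ∑ k, (π i * R i k * (∑ j, step w i j * τ j k)
            + π i * R i k * (∑ j, step w k j * τ i j)) := by
          rw [← Finset.sum_add_distrib]
          exact sum_congr rfl fun i _ => (Finset.sum_add_distrib).symm
      _ = ∑ i, ∑ k, π i * R i k
            * (2 * τ i k - 2 + (if i = k then 2 * remeet w τ i else 0)) := by
          refine sum_congr rfl fun i _ => sum_congr rfl fun k _ => ?_
          rw [← mul_add, ← Finset.sum_add_distrib, bracket w τ hτ i k]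
      _ = (∑ i, ∑ k, π i * R i k * (2 * τ i k)) - (∑ i, ∑ k, π i * R i k * 2)
            + (∑ i, ∑ k, π i * R i k * (if i = k then 2 * remeet w τ i else 0)) := by
          simp only [mul_add, mul_sub, Finset.sum_add_distrib, Finset.sum_sub_distrib]
      _ = 2 * (∑ i, ∑ k, π i * R i k * τ i k) - 2
            + 2 * (∑ i, π i * R i i * remeet w τ i) := by
          congr 1
          · congr 1
            · rw [Finset.mul_sum]
              exact sum_congr rfl fun i _ => by
                rw [Finset.mul_sum]; exact sum_congr rfl fun k _ => by ring
            · have : ∀ i, ∑ k, π i * R i k * 2 = 2 * ∑ k, π i * R i k := fun i => by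
                rw [Finset.mul_sum]; exact sum_congr rfl fun k _ => by ring
              rw [sum_congr rfl fun i _ => this i, ← Finset.mul_sum, hPR, mul_one]
          · have : ∀ i, ∑ k, π i * R i k * (if i = k then 2 * remeet w τ i else 0)
                = 2 * (π i * R i i * remeet w τ i) := by
              intro i
              simp only [mul_ite, mul_zero, Finset.sum_ite_eq, Finset.mem_univ, if_true]
              ring
            rw [sum_congr rfl fun i _ => this i, ← Finset.mul_sum]
  linarith


lemma stepN_one (i j : V) : stepN w 1 i j = step w i j := by
  rw [stepN, pow_one]; rfl

lemma stepN_two (i j : V) : stepN w 2 i j = ∑ k, step w i k * step w k j := by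
  rw [stepN, pow_two, Matrix.mul_apply]; rfl

lemma stepN_three (i j : V) : stepN w 3 i j = ∑ k, stepN w 2 i k * step w k j := by
  rw [stepN, pow_succ, Matrix.mul_apply]; rfl

lemma sum_stepN_two (hdeg : ∀ i, 0 < deg w i) (i : V) : ∑ k, stepN w 2 i k = 1 := by
  rw [sum_congr rfl fun k _ => stepN_two w i k, Finset.sum_comm]
  have h1 : ∀ m, ∑ k, step w i m * step w m k = step w i m := fun m => by
    rw [← Finset.mul_sum, sum_step w hdeg m, mul_one]
  rw [sum_congr rfl fun m _ => h1 m, sum_step w hdeg i]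

lemma rev_two [Nonempty V] (hsym : ∀ i j, w i j = w j i) (hdeg : ∀ i, 0 < deg w i)
    (i k : V) : statDist w i * stepN w 2 i k = statDist w k * stepN w 2 k i := by
  rw [stepN_two, stepN_two, Finset.mul_sum, Finset.mul_sum]
  refine sum_congr rfl fun j _ => ?_
  have a := rev w hsym hdeg i j
  have b := rev w hsym hdeg j k
  calc statDist w i * (step w i j * step w j k)
      = (statDist w i * step w i j) * step w j k := by ring
    _ = (statDist w j * step w j i) * step w j k := by rw [a]
    _ = step w j i * (statDist w j * step w j k) := by ring
    _ = step w j i * (statDist w k * step w k j) := by rw [b]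
    _ = statDist w k * (step w k j * step w j i) := by ring

lemma tauWalk_one_eq (hτ : IsCoalescent w τ) :
    tauWalk w τ 1 = ∑ i, ∑ k, statDist w i * step w i k * τ i k := by
  simp only [tauWalk, stepN_one]

lemma tauWalk_two_eq (hτ : IsCoalescent w τ) :
    tauWalk w τ 2 = ∑ i, ∑ k, statDist w i * step w i k * (∑ j, step w k j * τ i j) := by
  simp only [tauWalk, stepN_two]
  refine sum_congr rfl fun i _ => ?_
  exact sum_kernel_swap (statDist w i) (step w i) (step w) (τ i)

lemma tauWalk_three_eq (hτ : IsCoalescent w τ) :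
    tauWalk w τ 3
      = ∑ i, ∑ k, statDist w i * stepN w 2 i k * (∑ j, step w k j * τ i j) := by
  simp only [tauWalk, stepN_three]
  refine sum_congr rfl fun i _ => ?_
  exact sum_kernel_swap (statDist w i) (stepN w 2 i) (step w) (τ i)

lemma step_one_identity [Nonempty V] (hsym : ∀ i j, w i j = w j i)
    (hdeg : ∀ i, 0 < deg w i) (hτ : IsCoalescent w τ) :
    tauWalk w τ 1 = (∑ i, statDist w i * remeet w τ i) - 1 := by
  have key := key_identity w τ hdeg hτ (fun i k => if i = k then (1:ℝ) else 0)
    (fun i k => by by_cases h : i = k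
                   · subst h; rfl
                   · simp [h, Ne.symm h])
    (fun i => by simp)
  simp only [mul_ite, mul_one, mul_zero, ite_mul, zero_mul,
    Finset.sum_ite_eq, Finset.mem_univ, if_true] at key
  have hd : ∀ i, τ i i = 0 := hτ.2.1
  simp only [hd, mul_zero, Finset.sum_const_zero, zero_sub] at key
  have hT1 : tauWalk w τ 1 = ∑ i, statDist w i * ∑ j, step w i j * τ i j := by
    rw [tauWalk_one_eq w τ hτ]
    refine sum_congr rfl fun i _ => ?_
    rw [Finset.mul_sum]
    exact sum_congr rfl fun k _ => by ring
  rw [hT1, key]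
  ring


lemma step_two_identity [Nonempty V] (hsym : ∀ i j, w i j = w j i)
    (hdeg : ∀ i, 0 < deg w i) (hτ : IsCoalescent w τ) :
    tauWalk w τ 2 = tauWalk w τ 1 - 1
      + ∑ i, statDist w i * step w i i * remeet w τ i := by
  have key := key_identity w τ hdeg hτ (step w) (rev w hsym hdeg) (sum_step w hdeg)
  rw [tauWalk_two_eq w τ hτ, key, tauWalk_one_eq w τ hτ]

lemma step_three_identity [Nonempty V] (hsym : ∀ i j, w i j = w j i)
    (hdeg : ∀ i, 0 < deg w i) (hτ : IsCoalescent w τ) :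
    tauWalk w τ 3 = tauWalk w τ 2 - 1
      + ∑ i, statDist w i * stepN w 2 i i * remeet w τ i := by
  have key := key_identity w τ hdeg hτ (stepN w 2) (rev_two w hsym hdeg)
    (sum_stepN_two w hdeg)
  rw [tauWalk_three_eq w τ hτ, key]
  rfl

lemma kac_identity [Nonempty V] (hsym : ∀ i j, w i j = w j i)
    (hdeg : ∀ i, 0 < deg w i) (hτ : IsCoalescent w τ) :
    ∑ i, statDist w i * statDist w i * remeet w τ i = 1 := by
  have key := key_identity w τ hdeg hτ (fun _ k => statDist w k)
    (fun i k => by ring) (fun _ => sum_statDist w hdeg)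
  have hL : ∀ i, ∑ k, statDist w i * statDist w k * (∑ j, step w k j * τ i j)
      = ∑ k, statDist w i * statDist w k * τ i k := by
    intro i
    rw [← sum_kernel_swap (statDist w i) (statDist w) (step w) (τ i)]
    refine sum_congr rfl fun j _ => ?_
    rw [stat w hsym hdeg j]
  rw [sum_congr rfl fun i (_ : i ∈ univ) => hL i] at key
  linarith


def cmat (w : V → V → ℝ) (i k : V) : ℝ := (if i = k then 1 else 0) + step w i k

lemma cmat_rev [Nonempty V] (hsym : ∀ i j, w i j = w j i) (hdeg : ∀ i, 0 < deg w i)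
    (i k : V) : statDist w i * cmat w i k = statDist w k * cmat w k i := by
  by_cases h : i = k
  · subst h; rfl
  · simp only [cmat, if_neg h, if_neg (Ne.symm h), zero_add]
    exact rev w hsym hdeg i k

lemma cmat_sum (hdeg : ∀ i, 0 < deg w i) (i : V) : ∑ k, cmat w i k = 2 := by
  simp only [cmat]
  rw [Finset.sum_add_distrib, sum_step w hdeg i, Finset.sum_ite_eq]
  simp only [Finset.mem_univ, if_true]
  norm_num

lemma cmat_mul_sum (i : V) :
    ∑ k, cmat w i k * cmat w k i = 1 + 2 * step w i i + stepN w 2 i i := by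
  have h1 : ∀ k, cmat w i k * cmat w k i
      = (if i = k then (1:ℝ) + 2 * step w i k else 0) + step w i k * step w k i := by
    intro k
    by_cases h : i = k
    · subst h
      simp only [cmat, if_pos rfl, eq_self_iff_true, if_true]
      ring
    · simp only [cmat, if_neg h, if_neg (Ne.symm h), zero_add, zero_mul, mul_zero]
  rw [sum_congr rfl fun k _ => h1 k, Finset.sum_add_distrib, Finset.sum_ite_eq,
    stepN_two]
  simp only [Finset.mem_univ, if_true]

lemma sos [Nonempty V] (hsym : ∀ i j, w i j = w j i) (hdeg : ∀ i, 0 < deg w i)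
    (i : V) :
    statDist w i * (1 + 2 * step w i i + stepN w 2 i i) - 4 * statDist w i ^ 2
      = ∑ k, statDist w k * (cmat w k i - 2 * statDist w i) ^ 2 := by
  have expand : ∀ k, statDist w k * (cmat w k i - 2 * statDist w i) ^ 2
      = statDist w i * (cmat w i k * cmat w k i) - 4 * statDist w i ^ 2 * cmat w i k
        + 4 * statDist w i ^ 2 * statDist w k := by
    intro k
    have h2 : statDist w k * cmat w k i = statDist w i * cmat w i k :=
      (cmat_rev w hsym hdeg i k).symm
    linear_combination (cmat w k i - 4 * statDist w i) * h2
  rw [sum_congr rfl fun k _ => expand k, Finset.sum_add_distrib, Finset.sum_sub_distrib,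
    ← Finset.mul_sum, ← Finset.mul_sum, ← Finset.mul_sum, cmat_mul_sum w i,
    cmat_sum w hdeg i, sum_statDist w hdeg]
  ring

end Aux

/-- `τ^{(2)} + τ^{(3)} ≥ τ^{(1)}`, with equality iff `G` has
exactly two vertices and no self-loops. -/
theorem tau2_add_tau3_ge_tau1 (w : V → V → ℝ) (hG : IsWeightedGraph w)
    (hN : 2 ≤ Fintype.card V) (τ : V → V → ℝ) (hτ : IsCoalescent w τ) :
    tauWalk w τ 2 + tauWalk w τ 3 ≥ tauWalk w τ 1 ∧
    (tauWalk w τ 2 + tauWalk w τ 3 = tauWalk w τ 1 ↔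
      Fintype.card V = 2 ∧ ∀ i, w i i = 0) := by
  obtain ⟨hsym, hnn, hdeg, -⟩ := hG
  have hne : Nonempty V := Fintype.card_pos_iff.mp (by omega)
  have h1 := step_one_identity w τ hsym hdeg hτ
  have h2 := step_two_identity w τ hsym hdeg hτ
  have h3 := step_three_identity w τ hsym hdeg hτ
  have hkac := kac_identity w τ hsym hdeg hτ
  have hsplit : ∑ i, (statDist w i * (1 + 2 * step w i i + stepN w 2 i i)
        - 4 * statDist w i ^ 2) * remeet w τ i
      = ((∑ i, statDist w i * remeet w τ i)
        + 2 * (∑ i, statDist w i * step w i i * remeet w τ i)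
        + (∑ i, statDist w i * stepN w 2 i i * remeet w τ i))
        - 4 * (∑ i, statDist w i * statDist w i * remeet w τ i) := by
    rw [Finset.mul_sum, Finset.mul_sum,
      ← Finset.sum_add_distrib, ← Finset.sum_add_distrib, ← Finset.sum_sub_distrib]
    exact sum_congr rfl fun i _ => by ring
  have hD : tauWalk w τ 2 + tauWalk w τ 3 - tauWalk w τ 1
      = ∑ i, (∑ k, statDist w k * (cmat w k i - 2 * statDist w i) ^ 2)
          * remeet w τ i := by
    have hrw : ∀ i, (∑ k, statDist w k * (cmat w k i - 2 * statDist w i) ^ 2)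
          * remeet w τ i
        = (statDist w i * (1 + 2 * step w i i + stepN w 2 i i)
            - 4 * statDist w i ^ 2) * remeet w τ i := fun i => by
      rw [← sos w hsym hdeg i]
    rw [sum_congr rfl fun i _ => hrw i, hsplit, hkac]
    linarith
  have hterm_nonneg : ∀ i ∈ (univ : Finset V),
      0 ≤ (∑ k, statDist w k * (cmat w k i - 2 * statDist w i) ^ 2)
          * remeet w τ i := fun i _ =>
    mul_nonneg
      (Finset.sum_nonneg fun k _ =>
        mul_nonneg (statDist_pos w hdeg k).le (sq_nonneg _))
      (le_trans zero_le_one (one_le_remeet w τ hnn hdeg hτ i))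
  have hDnn : 0 ≤ tauWalk w τ 2 + tauWalk w τ 3 - tauWalk w τ 1 := by
    rw [hD]; exact Finset.sum_nonneg hterm_nonneg
  refine ⟨by linarith, ?_, ?_⟩
  · intro heq
    have hzero : ∑ i, (∑ k, statDist w k * (cmat w k i - 2 * statDist w i) ^ 2)
        * remeet w τ i = 0 := by rw [← hD]; linarith
    have hall := (Finset.sum_eq_zero_iff_of_nonneg hterm_nonneg).mp hzero
    have hc : ∀ i k, cmat w k i = 2 * statDist w i := by
      intro i k
      have hi := hall i (mem_univ i)
      have hrpos : 0 < remeet w τ i :=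
        lt_of_lt_of_le one_pos (one_le_remeet w τ hnn hdeg hτ i)
      have hsum0 : ∑ k, statDist w k * (cmat w k i - 2 * statDist w i) ^ 2 = 0 := by
        rcases mul_eq_zero.mp hi with h | h
        · exact h
        · exact absurd h hrpos.ne'
      have hk := (Finset.sum_eq_zero_iff_of_nonneg
        (fun k _ => mul_nonneg (statDist_pos w hdeg k).le (sq_nonneg _))).mp
        hsum0 k (mem_univ k)
      rcases mul_eq_zero.mp hk with h | h
      · exact absurd h (statDist_pos w hdeg k).ne'
      · have := sq_eq_zero_iff.mp h
        linarith
    have hhalf : ∀ i, (1:ℝ)/2 ≤ statDist w i := by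
      intro i
      have hcc := hc i i
      have hs := step_nonneg w hnn hdeg i i
      simp only [cmat, if_pos rfl, if_true] at hcc
      linarith
    have hsum1 : ∑ i, statDist w i = 1 := sum_statDist w hdeg
    have hcard2 : Fintype.card V = 2 := by
      have hlow : ∑ _i : V, (1/2:ℝ) ≤ ∑ i, statDist w i :=
        Finset.sum_le_sum fun i _ => hhalf i
      rw [Finset.sum_const, Finset.card_univ, nsmul_eq_mul, hsum1] at hlow
      have hle2 : (Fintype.card V : ℝ) ≤ 2 := by linarith
      have : Fintype.card V ≤ 2 := by exact_mod_cast hle2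
      omega
    have hpi : ∀ i, statDist w i = 1/2 := by
      intro i
      have hsplit2 := Finset.add_sum_erase univ (statDist w) (mem_univ i)
      have hcard1 : (univ.erase i).card = 1 := by
        rw [Finset.card_erase_of_mem (mem_univ i), Finset.card_univ, hcard2]
      have herase : (1:ℝ)/2 ≤ ∑ j ∈ univ.erase i, statDist w j := by
        have hlow2 : ∑ _j ∈ univ.erase i, (1/2:ℝ)
            ≤ ∑ j ∈ univ.erase i, statDist w j :=
          Finset.sum_le_sum fun j _ => hhalf j
        rw [Finset.sum_const, hcard1, nsmul_eq_mul] at hlow2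
        linarith
      have := hhalf i
      rw [hsum1] at hsplit2
      linarith
    refine ⟨hcard2, fun i => ?_⟩
    have hcc := hc i i
    simp only [cmat, if_pos rfl, if_true] at hcc
    rw [hpi i] at hcc
    have hstep0 : step w i i = 0 := by linarith
    rw [step, div_eq_zero_iff] at hstep0
    rcases hstep0 with h | h
    · exact h
    · exact absurd h (hdeg i).ne'
  · rintro ⟨hcard, hloop⟩
    have hc : ∀ i k, cmat w k i = 2 * statDist w i := by
      intro i k
      have hcard1 : (univ.erase i).card = 1 := by
        rw [Finset.card_erase_of_mem (mem_univ i), Finset.card_univ, hcard]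
      obtain ⟨o, ho⟩ := Finset.card_eq_one.mp hcard1
      have hoi : o ≠ i := by
        have : o ∈ univ.erase i := ho ▸ Finset.mem_singleton_self o
        exact (Finset.mem_erase.mp this).1
      have huniv : (univ : Finset V) = {i, o} := by
        rw [← Finset.insert_erase (mem_univ i), ho]
      have hio : i ∉ ({o} : Finset V) := by simp [Ne.symm hoi]
      have hdegi : deg w i = w i o := by
        rw [deg, huniv, Finset.sum_insert hio, Finset.sum_singleton, hloop i, zero_add]
      have hdego : deg w o = w o i := by
        rw [deg, huniv, Finset.sum_insert hio, Finset.sum_singleton, hloop o,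
          add_zero]
      have hW : Wtot w = 2 * w i o := by
        rw [Wtot, huniv, Finset.sum_insert hio, Finset.sum_singleton, hdegi, hdego,
          hsym o i]
        ring
      have hwpos : 0 < w i o := by
        have := hdeg i; rwa [hdegi] at this
      have hpii : statDist w i = 1/2 := by
        rw [statDist, hdegi, hW]
        field_simp
      rw [hpii]
      by_cases hk : k = i
      · subst hk
        simp only [cmat, if_pos rfl, step, hloop k, zero_div, add_zero]
        norm_num
      · have hko : k = o := by
          have : k ∈ (univ : Finset V) := mem_univ k
          rw [huniv] at this
          rcases Finset.mem_insert.mp this with h | h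
          · exact absurd h hk
          · exact Finset.mem_singleton.mp h
        subst hko
        simp only [cmat, if_neg hk, step, hdego, zero_add]
        rw [div_self]
        · norm_num
        · rw [← hdego]; exact (hdeg k).ne'
    have hz : tauWalk w τ 2 + tauWalk w τ 3 - tauWalk w τ 1 = 0 := by
      rw [hD]
      refine Finset.sum_eq_zero fun i _ => ?_
      have : ∀ k ∈ (univ : Finset V),
          statDist w k * (cmat w k i - 2 * statDist w i) ^ 2 = 0 := fun k _ => by
        rw [hc i k]; ring_nf
      rw [Finset.sum_eq_zero this, zero_mul]
    linarith

end EvoGraph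
end
end

section
/- Let G be a finite connected weighted graph with coalescence times (τ_{ij}). For every integer n ≥ 0, τ^{(n+1)} = τ^{(n)} + Σ_{i∈V} π_i p^{(n)}_{ii} τ⁺_i − 1, where τ⁺_i = 1 + Σ_{j∈V} p_{ij} τ_{ij} is the remeeting time at vertex i. -/
open Finset Filter Asymptotics

noncomputable section

namespace EvoGraph

variable {V : Type*} [Fintype V] [DecidableEq V]

lemma step_sum (w : V → V → ℝ) (hdeg : ∀ i, deg w i ≠ 0) (i : V) :
    ∑ j, step w i j = 1 := by
  simp only [step, ← Finset.sum_div]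
  rw [← deg, div_self (hdeg i)]

lemma stepN_succ (w : V → V → ℝ) (n : ℕ) (i j : V) :
    stepN w (n + 1) i j = ∑ k, stepN w n i k * step w k j := by
  rw [stepN, pow_succ, Matrix.mul_apply]; rfl

lemma stepN_succ' (w : V → V → ℝ) (n : ℕ) (i j : V) :
    stepN w (n + 1) i j = ∑ k, step w i k * stepN w n k j := by
  rw [stepN, pow_succ', Matrix.mul_apply]; rfl

lemma stepN_sum (w : V → V → ℝ) (hdeg : ∀ i, deg w i ≠ 0) (n : ℕ) (i : V) :
    ∑ j, stepN w n i j = 1 := by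
  induction n generalizing i with
  | zero => simp [stepN, Matrix.one_apply]
  | succ n ih =>
    simp_rw [stepN_succ]
    rw [Finset.sum_comm]
    simp_rw [← Finset.mul_sum, step_sum w hdeg, mul_one]
    exact ih i


lemma sum3_comm (G : V → V → V → ℝ) :
    ∑ i, ∑ j, ∑ k, G i j k = ∑ k, ∑ j, ∑ i, G i j k :=
  calc ∑ i, ∑ j, ∑ k, G i j k
      = ∑ i, ∑ k, ∑ j, G i j k := Finset.sum_congr rfl fun i _ => Finset.sum_comm
    _ = ∑ k, ∑ i, ∑ j, G i j k := Finset.sum_comm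
    _ = ∑ k, ∑ j, ∑ i, G i j k := Finset.sum_congr rfl fun k _ => Finset.sum_comm

/-- for every `n ≥ 0`,
`τ^{(n+1)} = τ^{(n)} + ∑_i π_i p^{(n)}_{ii} τ⁺_i − 1`. -/
theorem tauWalk_succ (w : V → V → ℝ) (hG : IsWeightedGraph w)
    (hN : 2 ≤ Fintype.card V) (τ : V → V → ℝ) (hτ : IsCoalescent w τ) (n : ℕ) :
    tauWalk w τ (n + 1) =
      tauWalk w τ n + (∑ i, statDist w i * stepN w n i i * remeet w τ i) - 1 := by
  obtain ⟨hsym, hnn, hdeg, -⟩ := hG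
  obtain ⟨hτsym, hτdiag, hτrec⟩ := hτ
  have hdeg' : ∀ i, deg w i ≠ 0 := fun i => (hdeg i).ne'
  have : Nonempty V := Fintype.card_pos_iff.mp (by omega)
  have hWpos : 0 < Wtot w := Finset.sum_pos (fun i _ => hdeg i) Finset.univ_nonempty
  have hπ : ∑ i, statDist w i = 1 := by
    simp only [statDist, ← Finset.sum_div]
    rw [← Wtot, div_self hWpos.ne']
  have hrev : ∀ i j, statDist w i * step w i j = statDist w j * step w j i := by
    intro i j
    rw [statDist, statDist, step, step, hsym i j]
    field_simp [hdeg' i, hdeg' j]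
  have key : ∀ i j, statDist w i * stepN w n i j * τ i j
      + (if i = j then statDist w i * stepN w n i i * remeet w τ i else 0)
      = statDist w i * stepN w n i j
        + (1/2) * ∑ k, statDist w i * stepN w n i j * (step w i k * τ k j)
        + (1/2) * ∑ k, statDist w i * stepN w n i j * (step w j k * τ i k) := by
    intro i j
    by_cases h : i = j
    · subst h
      have hs : ∀ k, τ k i = τ i k := fun k => hτsym k i
      rw [if_pos rfl]
      simp only [hτdiag, mul_zero, zero_add, remeet]
      simp_rw [hs]
      rw [mul_add, mul_one, Finset.mul_sum]
      ring
    · rw [if_neg h, add_zero, hτrec i j h, Finset.sum_add_distrib,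
        ← Finset.mul_sum, ← Finset.mul_sum]
      ring
  have H : ∑ i, ∑ j, (statDist w i * stepN w n i j * τ i j
      + (if i = j then statDist w i * stepN w n i i * remeet w τ i else 0))
      = ∑ i, ∑ j, (statDist w i * stepN w n i j
        + (1/2) * ∑ k, statDist w i * stepN w n i j * (step w i k * τ k j)
        + (1/2) * ∑ k, statDist w i * stepN w n i j * (step w j k * τ i k)) :=
    Finset.sum_congr rfl fun i _ => Finset.sum_congr rfl fun j _ => key i j
  have hL : ∑ i, ∑ j, (statDist w i * stepN w n i j * τ i j
      + (if i = j then statDist w i * stepN w n i i * remeet w τ i else 0))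
      = tauWalk w τ n + ∑ i, statDist w i * stepN w n i i * remeet w τ i := by
    simp_rw [Finset.sum_add_distrib]
    rw [tauWalk]
    congr 1
    exact Finset.sum_congr rfl fun i _ => by simp [Finset.sum_ite_eq]
  have h1 : ∑ i, ∑ j, statDist w i * stepN w n i j = 1 := by
    simp_rw [← Finset.mul_sum, stepN_sum w hdeg', mul_one]
    exact hπ
  have hA : ∑ i, ∑ j, ∑ k, statDist w i * stepN w n i j * (step w i k * τ k j)
      = tauWalk w τ (n + 1) := by
    have e : ∀ i j k, statDist w i * stepN w n i j * (step w i k * τ k j)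
        = statDist w k * (step w k i * stepN w n i j) * τ k j := fun i j k =>
      calc statDist w i * stepN w n i j * (step w i k * τ k j)
          = statDist w i * step w i k * (stepN w n i j * τ k j) := by ring
        _ = statDist w k * step w k i * (stepN w n i j * τ k j) := by rw [hrev]
        _ = statDist w k * (step w k i * stepN w n i j) * τ k j := by ring
    simp_rw [e]
    rw [sum3_comm, tauWalk]
    refine Finset.sum_congr rfl fun k _ => Finset.sum_congr rfl fun j _ => ?_
    rw [stepN_succ', Finset.mul_sum, Finset.sum_mul]
  have hB : ∑ i, ∑ j, ∑ k, statDist w i * stepN w n i j * (step w j k * τ i k)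
      = tauWalk w τ (n + 1) := by
    calc ∑ i, ∑ j, ∑ k, statDist w i * stepN w n i j * (step w j k * τ i k)
        = ∑ i, ∑ k, ∑ j, statDist w i * stepN w n i j * (step w j k * τ i k) :=
          Finset.sum_congr rfl fun i _ => Finset.sum_comm
      _ = tauWalk w τ (n + 1) := by
          rw [tauWalk]
          refine Finset.sum_congr rfl fun i _ => Finset.sum_congr rfl fun k _ => ?_
          rw [stepN_succ, Finset.mul_sum, Finset.sum_mul]
          exact Finset.sum_congr rfl fun j _ => by ring
  have hR : ∑ i, ∑ j, (statDist w i * stepN w n i j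
      + (1/2) * ∑ k, statDist w i * stepN w n i j * (step w i k * τ k j)
      + (1/2) * ∑ k, statDist w i * stepN w n i j * (step w j k * τ i k))
      = 1 + tauWalk w τ (n + 1) := by
    have pull : ∀ f : V → V → V → ℝ, ∑ i, ∑ j, (1/2 : ℝ) * ∑ k, f i j k
        = (1/2 : ℝ) * ∑ i, ∑ j, ∑ k, f i j k := by
      intro f
      rw [Finset.mul_sum]
      exact Finset.sum_congr rfl fun i _ => by rw [Finset.mul_sum]
    simp_rw [Finset.sum_add_distrib]
    rw [pull, pull, hA, hB, h1]
    ring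
  rw [hL, hR] at H
  linarith

end EvoGraph
end
end
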